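/- Under the same hypotheses (1-D steady Euler with force $\bar f$, constant mass flux $J=\bar\rho\bar u>0$), the squared Mach number $\bar M^2 = \bar u^2/c^2(\bar\rho)$ satisfies the ODE $\frac{d}{dx}\bar M^2 = \frac{(\gamma+1)\bar M^2}{\bar M^2 - 1}\cdot\frac{\bar f}{c^2(\bar\rho)}$ wherever $\bar M^2\neq 1$. -/

import Mathlib

/-- For 1-D steady isentropic Euler flow with external force `f`,
constant mass flux `ρ u = J > 0`, the squared Mach number
`M² = u² / c²(ρ)` (with `c²(ρ) = γ ρ^(γ-1)`) satisfies
`(M²)' = (γ+1) M² / (M² - 1) · f / c²(ρ)` wherever `M² ≠ 1`. -/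
theorem stmt1 (γ J : ℝ) (hγ : 1 < γ) (hJ : 0 < J)
    (u ρ f : ℝ → ℝ) (hu : Differentiable ℝ u) (hρ : Differentiable ℝ ρ)
    (hupos : ∀ x, 0 < u x) (hρpos : ∀ x, 0 < ρ x)
    (hmass : ∀ x, ρ x * u x = J)
    (hmom : ∀ x, ρ x * u x * deriv u x + deriv (fun y => ρ y ^ γ) x = ρ x * f x)
    (x : ℝ) (hx : (u x) ^ 2 / (γ * ρ x ^ (γ - 1)) ≠ 1) :
    deriv (fun y => (u y) ^ 2 / (γ * ρ y ^ (γ - 1))) x =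
      (γ + 1) * ((u x) ^ 2 / (γ * ρ x ^ (γ - 1))) /
          ((u x) ^ 2 / (γ * ρ x ^ (γ - 1)) - 1) *
        (f x / (γ * ρ x ^ (γ - 1))) := by
  have hr : 0 < ρ x := hρpos x
  have hv : 0 < u x := hupos x
  have hγ0 : 0 < γ := lt_trans one_pos hγ
  have hB : 0 < ρ x ^ (γ - 2) := Real.rpow_pos_of_pos hr _
  have hrw : ρ x ^ (γ - 1) = ρ x ^ (γ - 2) * ρ x := by
    rw [← Real.rpow_add_one hr.ne' (γ - 2)]
    congr 1; ring
  have hdρ : HasDerivAt ρ (deriv ρ x) x := (hρ x).hasDerivAt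
  have hdu : HasDerivAt u (deriv u x) x := (hu x).hasDerivAt
  set ρ' := deriv ρ x
  set u' := deriv u x
  -- mass conservation derivative
  have hmass' : ρ' * u x + ρ x * u' = 0 := by
    have h1 : (fun y => ρ y * u y) = fun _ => J := funext hmass
    have h2 : deriv (fun y => ρ y * u y) x = _ := (hdρ.mul hdu).deriv
    rw [h1, deriv_const] at h2
    linarith [h2.symm]
  -- derivative of ρ^γ
  have hpow : deriv (fun y => ρ y ^ γ) x = ρ' * γ * ρ x ^ (γ - 1) := by
    have := (hdρ.rpow_const (p := γ) (Or.inl hr.ne')).deriv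
    rw [this]
  have hmom' := hmom x
  rw [hpow, hrw] at hmom'
  -- derivative of M²
  have hden : HasDerivAt (fun y => γ * ρ y ^ (γ - 1))
      (γ * (ρ' * (γ - 1) * ρ x ^ (γ - 1 - 1))) x :=
    (hdρ.rpow_const (Or.inl hr.ne')).const_mul γ
  have hnum : HasDerivAt (fun y => u y ^ 2) (2 * u x * u') x := by
    have : HasDerivAt (fun y => u y ^ 2) _ x := hdu.pow 2
    simpa [mul_comm, mul_assoc] using this
  have hc2 : γ * ρ x ^ (γ - 1) ≠ 0 := by positivity
  have hM : deriv (fun y => u y ^ 2 / (γ * ρ y ^ (γ - 1))) x = _ := (hnum.div hden hc2).deriv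
  rw [hM]
  have he : γ - 1 - 1 = γ - 2 := by ring
  rw [he]
  rw [hrw] at hx ⊢
  have hc2' : γ * (ρ x ^ (γ - 2) * ρ x) ≠ 0 := by positivity
  have hne : u x ^ 2 - γ * (ρ x ^ (γ - 2) * ρ x) ≠ 0 := by
    intro h
    apply hx
    rw [div_eq_one_iff_eq hc2']
    linarith
  -- key momentum relation: u' (u² - c²) = u f
  have key0 : ρ x * (u' * (u x ^ 2 - γ * (ρ x ^ (γ - 2) * ρ x)) - u x * f x) = 0 := by
    linear_combination (u x) * hmom' - (γ * ρ x ^ (γ - 2) * ρ x) * hmass'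
  have key1 : u' * (u x ^ 2 - γ * (ρ x ^ (γ - 2) * ρ x)) = u x * f x := by
    rcases mul_eq_zero.mp key0 with h | h
    · exact absurd h hr.ne'
    · linarith
  trans ((γ + 1) * u x * u' / (γ * (ρ x ^ (γ - 2) * ρ x)))
  · rw [div_eq_div_iff (pow_ne_zero 2 hc2') hc2']
    linear_combination (-(γ - 1) * (γ * (ρ x ^ (γ - 2) * ρ x)) * u x * γ * ρ x ^ (γ - 2)) * hmass'
  · have hx1 : u x ^ 2 / (γ * (ρ x ^ (γ - 2) * ρ x)) - 1 ≠ 0 := sub_ne_zero.mpr hx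
    generalize γ * (ρ x ^ (γ - 2) * ρ x) = C at hc2' hne key1 hx1 ⊢
    field_simp
    linear_combination key1
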